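/- For an abelian group G, a character χ : G → ℝ/ℤ is continuous with respect to the natural topology (neighborhood base {mG : m ≥ 1} at 0) if and only if χ is a torsion element of Hom(G, ℝ/ℤ). -/

import Mathlib

/-- The subgroup mG = {m•x : x ∈ G} of an abelian group G. -/
def nsmulRange (G : Type*) [AddCommGroup G] (m : ℕ) : AddSubgroup G :=
  (m • AddMonoidHom.id G).range

/-- The natural topology: generated by the cosets of the subgroups mG, m ≥ 1. -/
def naturalTopology (G : Type*) [AddCommGroup G] : TopologicalSpace G :=
  TopologicalSpace.generateFrom
    {s | ∃ m : ℕ, 0 < m ∧ ∃ x : G, s = (fun y => x + y) '' (nsmulRange G m : Set G)}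

lemma mem_nsmulRange {G : Type*} [AddCommGroup G] {m : ℕ} {g : G} :
    g ∈ nsmulRange G m ↔ ∃ x : G, m • x = g := by
  simp [nsmulRange, AddMonoidHom.mem_range]

/-- An element of `ℝ/ℤ` all of whose natural multiples have norm `< 1/4` is zero. -/
lemma addcircle_small (y : AddCircle (1:ℝ)) (h : ∀ n : ℕ, ‖n • y‖ < 1/4) : y = 0 := by
  obtain ⟨x, rfl⟩ := QuotientAddGroup.mk_surjective y
  set x' := x - round x with hx'
  have hcoe : ((x' : ℝ) : AddCircle (1:ℝ)) = (x : AddCircle (1:ℝ)) := by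
    rw [hx']; simp [AddCircle.coe_eq_zero_iff]
  rw [← hcoe] at h ⊢
  have hb : |x'| ≤ 1/2 := by
    rw [hx']; have := abs_sub_round x; linarith
  by_contra hne
  have hx0 : x' ≠ 0 := by
    intro h0; apply hne; rw [h0]; norm_num
  have hr : 0 < |x'| := abs_pos.mpr hx0
  have h1 := h 1
  have hnorm1 : ‖((x' : ℝ) : AddCircle (1:ℝ))‖ = |x'| := by
    rw [AddCircle.norm_coe_eq_abs_iff (1:ℝ) one_ne_zero]
    simpa using hb
  have hsmall : |x'| < 1/4 := by rwa [one_smul, hnorm1] at h1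
  set n : ℕ := ⌈(1/4) / |x'|⌉₊ with hn
  have hge : (1/4 : ℝ) ≤ n * |x'| := by
    rw [hn]
    calc (1/4 : ℝ) = ((1/4)/|x'|) * |x'| := by field_simp
    _ ≤ _ := by gcongr; exact Nat.le_ceil _
  have hlt : (n : ℝ) * |x'| < 1/2 := by
    have h2 : (n : ℝ) < (1/4)/|x'| + 1 := Nat.ceil_lt_add_one (by positivity)
    have h3 := mul_lt_mul_of_pos_right h2 hr
    rw [add_mul, div_mul_cancel₀ _ hr.ne', one_mul] at h3
    linarith
  have hcast : (n : ℕ) • ((x' : ℝ) : AddCircle (1:ℝ)) = ((n * x' : ℝ) : AddCircle (1:ℝ)) := by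
    simp [nsmul_eq_mul]
  have hnormn : ‖(n : ℕ) • ((x' : ℝ) : AddCircle (1:ℝ))‖ = (n:ℝ) * |x'| := by
    rw [hcast]
    rw [show (n:ℝ) * |x'| = |(n:ℝ) * x'| by rw [abs_mul, Nat.abs_cast]]
    rw [AddCircle.norm_coe_eq_abs_iff (1:ℝ) one_ne_zero]
    rw [abs_mul, Nat.abs_cast]
    simpa using hlt.le
  have := h n
  rw [hnormn] at this
  linarith

/-- Any open set (for the natural topology) containing 0 contains some `mG`, `m ≥ 1`. -/
lemma zero_mem_open {G : Type*} [AddCommGroup G] {U : Set G}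
    (hU : TopologicalSpace.GenerateOpen
      {s | ∃ m : ℕ, 0 < m ∧ ∃ x : G, s = (fun y => x + y) '' (nsmulRange G m : Set G)} U)
    (h0 : (0 : G) ∈ U) :
    ∃ m : ℕ, 0 < m ∧ (nsmulRange G m : Set G) ⊆ U := by
  induction hU with
  | basic s hs =>
    obtain ⟨m, hm, x, rfl⟩ := hs
    refine ⟨m, hm, fun g hg => ?_⟩
    obtain ⟨y, hy, hxy⟩ := h0
    refine ⟨g + -x, ?_, by show x + (g + -x) = g; abel⟩
    have : -x ∈ nsmulRange G m := by
      rw [show -x = y from neg_eq_of_add_eq_zero_right hxy]; exact hy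
    exact AddSubgroup.add_mem _ hg this
  | univ => exact ⟨1, one_pos, Set.subset_univ _⟩
  | inter s t _ _ ihs iht =>
    obtain ⟨m₁, hm₁, hs⟩ := ihs h0.1
    obtain ⟨m₂, hm₂, ht⟩ := iht h0.2
    refine ⟨m₁ * m₂, Nat.mul_pos hm₁ hm₂, fun g hg => ?_⟩
    obtain ⟨x, rfl⟩ := mem_nsmulRange.mp hg
    exact ⟨hs (mem_nsmulRange.mpr ⟨m₂ • x, by rw [← mul_smul]⟩),
           ht (mem_nsmulRange.mpr ⟨m₁ • x, by rw [← mul_smul, Nat.mul_comm]⟩)⟩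
  | sUnion S _ ih =>
    obtain ⟨t, htS, h0t⟩ := h0
    obtain ⟨m, hm, hsub⟩ := ih t htS h0t
    exact ⟨m, hm, hsub.trans (Set.subset_sUnion_of_mem htS)⟩

/-- A character is continuous for the natural topology iff it is torsion. -/
theorem continuous_naturalTopology_iff_torsion (G : Type*) [AddCommGroup G]
    (χ : G →+ AddCircle (1 : ℝ)) :
    @Continuous G (AddCircle (1 : ℝ)) (naturalTopology G) inferInstance χ ↔
      ∃ m : ℕ, 0 < m ∧ m • χ = 0 := by
  letI : TopologicalSpace G := naturalTopology G
  constructor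
  · intro hcont
    have hV : IsOpen (χ ⁻¹' Metric.ball (0 : AddCircle (1:ℝ)) (1/4)) :=
      hcont.isOpen_preimage _ Metric.isOpen_ball
    have h0 : (0 : G) ∈ χ ⁻¹' Metric.ball (0 : AddCircle (1:ℝ)) (1/4) := by
      simp
    obtain ⟨m, hm, hsub⟩ := zero_mem_open hV h0
    refine ⟨m, hm, ?_⟩
    ext x
    have key : ∀ n : ℕ, ‖n • χ (m • x)‖ < 1/4 := by
      intro n
      have hmem : (m • (n • x) : G) ∈ (nsmulRange G m : Set G) :=
        mem_nsmulRange.mpr ⟨n • x, rfl⟩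
      have := hsub hmem
      rw [Set.mem_preimage, mem_ball_zero_iff] at this
      rwa [← map_nsmul, smul_comm]
    have := addcircle_small _ key
    simpa [map_nsmul] using this
  · rintro ⟨m, hm, hχ⟩
    rw [continuous_def]
    intro U hU
    have hunion : χ ⁻¹' U =
        ⋃ y ∈ χ ⁻¹' U, (fun z => y + z) '' (nsmulRange G m : Set G) := by
      ext g
      simp only [Set.mem_iUnion, Set.mem_preimage]
      constructor
      · intro hg
        exact ⟨g, hg, 0, AddSubgroup.zero_mem _, by simp⟩
      · rintro ⟨y, hy, z, hz, rfl⟩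
        obtain ⟨w, rfl⟩ := mem_nsmulRange.mp hz
        have : χ (m • w) = 0 := by
          have := DFunLike.congr_fun hχ w
          simpa [map_nsmul] using this
        simpa [map_add, this] using hy
    rw [hunion]
    refine isOpen_biUnion fun y hy => ?_
    exact TopologicalSpace.GenerateOpen.basic _ ⟨m, hm, y, rfl⟩
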